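/- Let Δ be a pure shifted simplicial complex of dimension a−1 on [n], and let Ψ(Δ) = {ψ(F) : F a facet of Δ} (with ψ taken with parameters r = n−a). Then the h-vector of Δ equals the f-vector of Ψ(Δ); that is, for every i, h_i(Δ) equals the number of facets F of Δ with deg ψ(F) = i. -/

import Mathlib

open Finset

noncomputable section

/-- The largest `a` with `C(a,ℓ) ≤ p` (searched within a sufficient bound). -/
def largestBinom (ℓ p : ℕ) : ℕ :=
  Nat.findGreatest (fun a => Nat.choose a ℓ ≤ p) (p + ℓ)

/-- The Macaulay lower shadow `∂^ℓ(p)`, computed from the `ℓ`-representation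
`p = C(a_ℓ,ℓ) + ⋯ + C(a_e,e)` via the greedy algorithm; `∂^ℓ(0) = 0`. -/
def mshadow : ℕ → ℕ → ℕ
  | 0, _ => 0
  | (ℓ+1), p =>
    if p = 0 then 0
    else Nat.choose (largestBinom (ℓ+1) p - 1) ℓ +
      mshadow ℓ (p - Nat.choose (largestBinom (ℓ+1) p) (ℓ+1))

/-- `(f 0, f 1, …, f d)` is an M-sequence (of nonnegative integers):
`f 0 = 1` and `∂^ℓ(f ℓ) ≤ f (ℓ-1)` for `1 ≤ ℓ ≤ d`. -/
def IsMSeqI (f : ℕ → ℤ) (d : ℕ) : Prop :=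
  f 0 = 1 ∧ (∀ ℓ ≤ d, 0 ≤ f ℓ) ∧
    ∀ ℓ, 1 ≤ ℓ → ℓ ≤ d → (mshadow ℓ (f ℓ).toNat : ℤ) ≤ f (ℓ - 1)

/-- A simplicial complex on `[n]`: a family of subsets closed under taking subsets. -/
def IsCplx {n : ℕ} (Δ : Set (Finset (Fin n))) : Prop :=
  ∀ F ∈ Δ, ∀ G, G ⊆ F → G ∈ Δ

/-- A shifted family on `[n]`: replacing a smaller element by a larger one stays in the family. -/
def ShiftedCplx {n : ℕ} (Δ : Set (Finset (Fin n))) : Prop :=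
  ∀ F ∈ Δ, ∀ r s : Fin n, r < s → r ∈ F → s ∉ F → insert s (F.erase r) ∈ Δ

/-- `F` is a facet (inclusion-maximal member) of `Δ`. -/
def IsFacet {n : ℕ} (Δ : Set (Finset (Fin n))) (F : Finset (Fin n)) : Prop :=
  F ∈ Δ ∧ ∀ G ∈ Δ, F ⊆ G → F = G

/-- `fvec Δ i` is the number of faces of cardinality `i` (that is, `f_{i-1}`). -/
def fvec {n : ℕ} (Δ : Set (Finset (Fin n))) (i : ℕ) : ℕ :=
  {F ∈ Δ | F.card = i}.ncard

/-- The `h`-vector of a `(d-1)`-complex, defined by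
`Σ h_j y^j = Σ f_{i-1} (1-y)^{d-i} y^i`, i.e. `h_j = Σ_{i≤j} (-1)^{j-i} C(d-i, j-i) f_{i-1}`. -/
def hvec {n : ℕ} (d : ℕ) (Δ : Set (Finset (Fin n))) (j : ℕ) : ℤ :=
  ∑ i ∈ Finset.range (j + 1),
    (-1 : ℤ) ^ (j - i) * (Nat.choose (d - i) (j - i) : ℤ) * (fvec Δ i : ℤ)

/-- The pure skeleton of `Δ` whose facets are the faces of cardinality `c`
(the pure `(c-1)`-skeleton `Δ^[c-1]`). -/
def pureSkel {n : ℕ} (Δ : Set (Finset (Fin n))) (c : ℕ) : Set (Finset (Fin n)) :=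
  {G | ∃ F ∈ Δ, F.card = c ∧ G ⊆ F}

/-- The `h̃`-triangle: `h̃_{i,j} = h_j(Δ^[i-1])`. -/
def htilde {n : ℕ} (Δ : Set (Finset (Fin n))) (i j : ℕ) : ℤ :=
  hvec i (pureSkel Δ i) j

/-- The `h`-triangle: `h_{i,j} = h̃_{i,j} - Σ_{ℓ≤j} h̃_{i+1,ℓ}`. -/
def htri {n : ℕ} (Δ : Set (Finset (Fin n))) (i j : ℕ) : ℤ :=
  htilde Δ i j - ∑ ℓ ∈ Finset.range (j + 1), htilde Δ (i + 1) ℓ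

/-- `σ(F)`: the longest terminal segment `{s, s+1, …, n}` contained in `F`
(empty if the last vertex is not in `F`). -/
def sigmaSeg {n : ℕ} (F : Finset (Fin n)) : Finset (Fin n) :=
  Finset.univ.filter (fun k => ∀ l, k ≤ l → l ∈ F)

/-- The degree of a monomial, given by its exponent vector. -/
def degM {k : ℕ} (m : Fin k → ℕ) : ℕ := ∑ i, m i

/-- The monomial `m` only involves the first `r` variables `w_1, …, w_r`. -/
def SupportedOn {k : ℕ} (r : ℕ) (m : Fin k → ℕ) : Prop :=
  ∀ i : Fin k, r ≤ (i : ℕ) → m i = 0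

/-- A multicomplex: a set of monomials closed under divisibility. -/
def IsMulticx {k : ℕ} (M : Set (Fin k → ℕ)) : Prop :=
  ∀ m ∈ M, ∀ m' : Fin k → ℕ, (∀ i, m' i ≤ m i) → m' ∈ M

/-- The monomial `w_j ⬝ (m / w_i)`. -/
def shiftMove {k : ℕ} (m : Fin k → ℕ) (i j : Fin k) : Fin k → ℕ :=
  fun t => if t = i then m i - 1 else if t = j then m j + 1 else m t

/-- A shifted multicomplex (on the first `r` variables). -/
def ShiftedMC {k : ℕ} (r : ℕ) (M : Set (Fin k → ℕ)) : Prop :=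
  ∀ m ∈ M, ∀ i j : Fin k, i < j → (j : ℕ) < r → 0 < m i → shiftMove m i j ∈ M

/-- Viewing `F` as the set of north-step positions of a lattice path, `xcoordS F p` is the
x-coordinate of the step at position `p`, i.e. the number of east steps strictly before `p`. -/
def xcoordS {k : ℕ} (F : Finset (Fin k)) (p : Fin k) : ℕ :=
  (Finset.univ.filter (fun j => j < p ∧ j ∉ F)).card

/-- `ψ = λ ∘ ν⁻¹` : the monomial on `W_r` associated to an `a`-subset `F` of `[r+a]`;
the exponent of `w_{i+1}` is the number of north steps with x-coordinate `i`. -/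
def psiM (r : ℕ) {k : ℕ} (F : Finset (Fin k)) : Fin k → ℕ :=
  fun i => if (i : ℕ) < r then (F.filter (fun p => xcoordS F p = (i : ℕ))).card else 0

/-- The partial sum `m_1 + ⋯ + m_i` of exponents strictly before position `i`. -/
def psum {k : ℕ} (m : Fin k → ℕ) (i : Fin k) : ℕ :=
  ∑ j ∈ Finset.univ.filter (fun j => j < i), m j

/-- `φ = ν ∘ λ⁻¹` : the set of north-step positions of the lattice path associated to a
monomial `m` on the first `r` variables (the remaining north steps lie in the last column). -/
def phiM (r : ℕ) {k : ℕ} (m : Fin k → ℕ) : Finset (Fin k) :=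
  Finset.univ.filter (fun p =>
    (∃ i : Fin k, (i : ℕ) < r ∧ psum m i + (i : ℕ) ≤ (p : ℕ) ∧
        (p : ℕ) < psum m i + m i + (i : ℕ)) ∨
    degM m + r ≤ (p : ℕ))

/-- The `a`-cone of `M` in the variable with (0-indexed) index `t`:
`{ w_{t+1}^ℓ · m : m ∈ M, deg m + ℓ < a }`. -/
def coneMC {k : ℕ} (t a : ℕ) (M : Set (Fin k → ℕ)) : Set (Fin k → ℕ) :=
  {p | ∃ m ∈ M, ∃ ℓ : ℕ, degM m + ℓ < a ∧
    p = fun i : Fin k => if (i : ℕ) = t then m i + ℓ else m i}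

/-- `Φ(M)`: the simplicial complex whose facets are the sets `φ(m)`, `m ∈ M`. -/
def PhiCplx (r : ℕ) {k : ℕ} (M : Set (Fin k → ℕ)) : Set (Finset (Fin k)) :=
  {G | ∃ m ∈ M, G ⊆ phiM r m}

/-- A `d`-metacomplex on `n`: a sequence of multicomplexes `M^[i]` on `{w_1,…,w_{n-i}}`
of degree `≤ i` with `C^i M^[i] ⊆ M^[i-1]`. -/
def IsMeta (n d : ℕ) (M : ℕ → Set (Fin n → ℕ)) : Prop :=
  (∀ i ≤ d, IsMulticx (M i) ∧ ∀ m ∈ M i, SupportedOn (n - i) m ∧ degM m ≤ i) ∧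
  (∀ i, 1 ≤ i → i ≤ d → coneMC (n - i) i (M i) ⊆ M (i - 1))

/-- A metacomplex is shifted if all its multicomplexes are. -/
def ShiftedMeta (n d : ℕ) (M : ℕ → Set (Fin n → ℕ)) : Prop :=
  ∀ i ≤ d, ShiftedMC (n - i) (M i)

/-- The `f`-triangle of a metacomplex: `f_{i,j}` = number of degree-`j` monomials in `M^[i]`. -/
def ftri (n : ℕ) (M : ℕ → Set (Fin n → ℕ)) (i j : ℕ) : ℕ :=
  {m ∈ M i | degM m = j}.ncard

/-- `Φ̄(𝓜) = ⋃_{i≤d} {φ^i(m) : m ∈ M^[i]}`. -/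
def PhiBar (n d : ℕ) (M : ℕ → Set (Fin n → ℕ)) : Set (Finset (Fin n)) :=
  {F | ∃ i ≤ d, ∃ m ∈ M i, F = phiM (n - i) m}

/-- `Ψ̄(Δ)`: the metacomplex with `M^[i] = {ψ(F) : F ∈ Δ, |F| = i}`. -/
def PsiBar (n : ℕ) (Δ : Set (Finset (Fin n))) : ℕ → Set (Fin n → ℕ) :=
  fun i => {p | ∃ F ∈ Δ, F.card = i ∧ p = psiM (n - i) F}

/-- The (finite) set of all monomials of degree `≤ t` in the variables `u_1, …, u_s`. -/
def monos (s t : ℕ) : Finset (Fin s → ℕ) :=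
  ((Finset.univ : Finset (Fin s → Fin (t + 1))).image
      (fun f => fun i => ((f i : ℕ)))).filter (fun m => degM m ≤ t)

/-- An `M_{s,t}`-array: a positive-integer valued function on monomials of degree `≤ t`
in `u_1,…,u_s` satisfying conditions (1)–(3) of Definition 4.1. -/
def IsMArray (s t : ℕ) (q : (Fin s → ℕ) → ℕ) : Prop :=
  (∀ m, degM m ≤ t → 0 < q m) ∧
  (∀ m, degM m ≤ t → ∀ i j : Fin s, i < j → 0 < m i → q m ≤ q (shiftMove m i j)) ∧
  (∀ m, degM m = t → q m = 1) ∧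
  (∀ m, degM m < t → ∀ j : Fin s,
    mshadow (t - degM m) (q m) ≤ q (fun x => if x = j then m x + 1 else m x))

/-- An `M_{s,t}(h)`-composition of `r`: an `M_{s,t}`-array with `q^m ≥ h_{t - deg m}`
and `Σ_m q^m = r`. -/
def IsComposition (s t : ℕ) (h : ℕ → ℤ) (r : ℤ) (q : (Fin s → ℕ) → ℕ) : Prop :=
  IsMArray s t q ∧ (∀ m, degM m ≤ t → h (t - degM m) ≤ (q m : ℤ)) ∧
  (∑ m ∈ monos s t, (q m : ℤ)) = r

/-- `Σ_s 𝒟`: the sum of the `q^m` over monomials divisible by the last variable `u_s`. -/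
def SigmaLast (s t : ℕ) (q : (Fin s → ℕ) → ℕ) : ℕ :=
  ∑ m ∈ (monos s t).filter (fun m => ∃ i : Fin s, (i : ℕ) = s - 1 ∧ 0 < m i), q m

/-- `ρ_{s,t}(r;h) = min { Σ_s 𝒟 : 𝒟 an M_{s,t}(h)-composition of r }`. -/
def rho (s t : ℕ) (h : ℕ → ℤ) (r : ℤ) : ℕ :=
  sInf {v : ℕ | ∃ q, IsComposition s t h r q ∧ SigmaLast s t q = v}

/-- A minimal non-face of `Δ`. -/
def IsMinNonface {n : ℕ} (Δ : Set (Finset (Fin n))) (G : Finset (Fin n)) : Prop :=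
  G ∉ Δ ∧ ∀ G' ⊂ G, G' ∈ Δ

/-- The Alexander dual `Δ* = {F : [n]∖F ∉ Δ}`. -/
def dualCplx {n : ℕ} (Δ : Set (Finset (Fin n))) : Set (Finset (Fin n)) :=
  {F | Fᶜ ∉ Δ}

/-- `m_{ℓ,k}(Δ)`: the number of minimal non-faces `G` of `Δ` with `|G| = k` and
`max G = ℓ + k - 1` (vertices labelled `1, …, n`). -/
def mGen {n : ℕ} (Δ : Set (Finset (Fin n))) (ℓ k : ℕ) : ℕ :=
  {G : Finset (Fin n) | IsMinNonface Δ G ∧ G.card = k ∧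
    (∃ v ∈ G, (v : ℕ) + 1 = ℓ + k - 1) ∧ ∀ u ∈ G, (u : ℕ) + 1 ≤ ℓ + k - 1}.ncard

/-- `μ_{ℓ,k}(Δ)` (written `muGen Δ k ℓ`), defined by the recursion
`m_{ℓ,k} = μ_{ℓ,k} − Σ_{q=1}^{ℓ} μ_{q,k−1}`. -/
def muGen {n : ℕ} (Δ : Set (Finset (Fin n))) : ℕ → ℕ → ℤ
  | 0, ℓ => (mGen Δ ℓ 0 : ℤ)
  | (k+1), ℓ => (mGen Δ ℓ (k+1) : ℤ) + ∑ q ∈ Finset.Icc 1 ℓ, muGen Δ k q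

/-- A lattice path from `(0,0)` to `(n-a, a)`, as a word in `{N, E}` of length `n`
with exactly `a` letters `N` (`true` = north). -/
def NPath (n a : ℕ) : Type :=
  {L : Fin n → Bool // (Finset.univ.filter (fun i => L i = true)).card = a}

/-- `ν(L)`: the set of positions of the north steps of `L`. -/
def nuP {n a : ℕ} (L : NPath n a) : Finset (Fin n) :=
  Finset.univ.filter (fun i => L.1 i = true)

/-- The height of the path after step `p` (number of north steps at positions `≤ p`). -/
def heightAt {n a : ℕ} (L : NPath n a) (p : Fin n) : ℕ :=
  (Finset.univ.filter (fun i => i ≤ p ∧ L.1 i = true)).card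

/-- `L ≤ L'` iff `L` never goes above `L'`. -/
def PathLe {n a : ℕ} (L L' : NPath n a) : Prop :=
  ∀ p : Fin n, heightAt L p ≤ heightAt L' p

/-- An order ideal of the poset `𝓛_{r,a}` of lattice paths. -/
def IsOrderIdealP {n a : ℕ} (Q : Set (NPath n a)) : Prop :=
  ∀ L ∈ Q, ∀ L', PathLe L' L → L' ∈ Q

/-- The x-coordinate of the step of `L` at position `p`. -/
def xcoordP {n a : ℕ} (L : NPath n a) (p : Fin n) : ℕ :=
  (Finset.univ.filter (fun j => j < p ∧ L.1 j = false)).card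

/-- `λ(L)`: the monomial `∏ w_i^{λ_i(L)}`, where `λ_i(L)` is the number of north steps
of `L` with x-coordinate `i - 1`. -/
def lamP (r : ℕ) {n a : ℕ} (L : NPath n a) : Fin n → ℕ :=
  fun i => if (i : ℕ) < r then
    (Finset.univ.filter (fun p => L.1 p = true ∧ xcoordP L p = (i : ℕ))).card
  else 0

section Aux

attribute [local instance] Classical.propDecidable

variable {n : ℕ}

lemma mem_sigmaSeg {F : Finset (Fin n)} {k : Fin n} :
    k ∈ sigmaSeg F ↔ ∀ l, k ≤ l → l ∈ F := by
  simp [sigmaSeg]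

lemma sigmaSeg_subset (F : Finset (Fin n)) : sigmaSeg F ⊆ F :=
  fun k hk => (mem_sigmaSeg.mp hk) k le_rfl

lemma filter_not_mem_card {r a : ℕ} (F : Finset (Fin (r + a))) (hF : F.card = a) :
    ((Finset.univ : Finset (Fin (r + a))).filter (fun j => j ∉ F)).card = r := by
  have h : (Finset.univ : Finset (Fin (r + a))).filter (fun j => j ∉ F) = Fᶜ := by
    ext j; simp
  rw [h, card_compl, hF]
  simp

lemma xcoordS_le {r a : ℕ} (F : Finset (Fin (r + a))) (hF : F.card = a) (p : Fin (r + a)) :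
    xcoordS F p ≤ r := by
  have hsub : (Finset.univ : Finset (Fin (r + a))).filter (fun j => j < p ∧ j ∉ F)
      ⊆ Finset.univ.filter (fun j => j ∉ F) := by
    intro j hj; simp only [Finset.mem_filter] at hj ⊢; exact ⟨hj.1, hj.2.2⟩
  have h := Finset.card_le_card hsub
  rwa [filter_not_mem_card F hF] at h

lemma xcoordS_eq_iff {r a : ℕ} (F : Finset (Fin (r + a))) (hF : F.card = a) (p : Fin (r + a))
    (hp : p ∈ F) : xcoordS F p = r ↔ p ∈ sigmaSeg F := by
  constructor
  · intro h
    have hsub : (Finset.univ : Finset (Fin (r + a))).filter (fun j => j < p ∧ j ∉ F)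
        ⊆ Finset.univ.filter (fun j => j ∉ F) := by
      intro j hj; simp only [Finset.mem_filter] at hj ⊢; exact ⟨hj.1, hj.2.2⟩
    have h' : (Finset.univ.filter (fun j => j < p ∧ j ∉ F)).card = r := h
    have heq := Finset.eq_of_subset_of_card_le hsub
      (by rw [filter_not_mem_card F hF]; exact le_of_eq h'.symm)
    rw [mem_sigmaSeg]
    intro l hl
    by_contra hlF
    have hl' : l ∈ Finset.univ.filter (fun j => j < p ∧ j ∉ F) := by
      rw [heq]; simp [hlF]
    simp only [Finset.mem_filter] at hl'
    exact absurd hl'.2.1 (not_lt.mpr hl)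
  · intro h
    have heq : (Finset.univ : Finset (Fin (r + a))).filter (fun j => j < p ∧ j ∉ F)
        = Finset.univ.filter (fun j => j ∉ F) := by
      ext j
      simp only [Finset.mem_filter, Finset.mem_univ, true_and]
      constructor
      · exact fun hj => hj.2
      · intro hj
        refine ⟨?_, hj⟩
        by_contra hc
        exact hj (mem_sigmaSeg.mp h j (not_lt.mp hc))
    rw [xcoordS, heq, filter_not_mem_card F hF]

lemma degM_psiM {r a : ℕ} (F : Finset (Fin (r + a))) (hF : F.card = a) :
    degM (psiM r F) = (F \ sigmaSeg F).card := by
  have h1 : degM (psiM r F) = ∑ b ∈ Finset.range r,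
      (F.filter (fun p => xcoordS F p = b)).card := by
    rw [degM]
    simp only [psiM]
    rw [Fin.sum_univ_eq_sum_range (fun b : ℕ => if b < r then
      (F.filter (fun p => xcoordS F p = b)).card else 0)]
    rw [← Finset.sum_filter]
    congr 1
    ext b
    simp only [Finset.mem_filter, Finset.mem_range]
    omega
  rw [h1]
  have h2 : (F.filter (fun p => xcoordS F p < r)).card
      = ∑ b ∈ Finset.range r, (F.filter (fun p => xcoordS F p = b)).card := by
    rw [Finset.card_eq_sum_card_fiberwise (f := fun p => xcoordS F p)
      (t := Finset.range r) (fun p hp => by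
        simp only [Finset.mem_coe, Finset.mem_filter] at hp; exact Finset.mem_range.mpr hp.2)]
    apply Finset.sum_congr rfl
    intro b hb
    congr 1
    ext p
    simp only [Finset.mem_filter, Finset.mem_range] at *
    constructor
    · rintro ⟨⟨h1', _⟩, h3⟩; exact ⟨h1', h3⟩
    · rintro ⟨h1', h3⟩; exact ⟨⟨h1', h3 ▸ hb⟩, h3⟩
  rw [← h2]
  congr 1
  ext p
  simp only [Finset.mem_filter, Finset.mem_sdiff]
  constructor
  · rintro ⟨hpF, hlt⟩
    refine ⟨hpF, fun hσ => ?_⟩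
    rw [← xcoordS_eq_iff F hF p hpF] at hσ
    omega
  · rintro ⟨hpF, hσ⟩
    refine ⟨hpF, ?_⟩
    have hle := xcoordS_le F hF p
    have hne : xcoordS F p ≠ r := fun hc => hσ ((xcoordS_eq_iff F hF p hpF).mp hc)
    omega

section Complex

variable {r a : ℕ} {Δ : Set (Finset (Fin (r + a)))}

lemma exists_facet_sup (hC : IsCplx Δ) {G : Finset (Fin (r + a))} (hG : G ∈ Δ) :
    ∃ F, IsFacet Δ F ∧ G ⊆ F := by
  obtain ⟨F, hFs, hmax⟩ := Finset.exists_max_image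
    ((Finset.univ : Finset (Finset (Fin (r + a)))).filter (fun H => H ∈ Δ ∧ G ⊆ H))
    Finset.card ⟨G, by simp [hG]⟩
  simp only [Finset.mem_filter, Finset.mem_univ, true_and] at hFs hmax
  exact ⟨F, ⟨hFs.1, fun H hH hsub =>
    Finset.eq_of_subset_of_card_le hsub (hmax H ⟨hH, hFs.2.trans hsub⟩)⟩, hFs.2⟩

lemma face_card_le (hC : IsCplx Δ) (hpure : ∀ F, IsFacet Δ F → F.card = a)
    {G : Finset (Fin (r + a))} (hG : G ∈ Δ) : G.card ≤ a := by
  obtain ⟨F, hF, hGF⟩ := exists_facet_sup hC hG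
  exact le_trans (Finset.card_le_card hGF) (le_of_eq (hpure F hF))

lemma facet_of_card (hC : IsCplx Δ) (hpure : ∀ F, IsFacet Δ F → F.card = a)
    {F : Finset (Fin (r + a))} (hF : F ∈ Δ) (hcard : F.card = a) : IsFacet Δ F :=
  ⟨hF, fun H hH hsub =>
    Finset.eq_of_subset_of_card_le hsub
      (le_trans (face_card_le hC hpure hH) hcard.ge)⟩

lemma exists_res (hC : IsCplx Δ) (hS : ShiftedCplx Δ)
    (hpure : ∀ F, IsFacet Δ F → F.card = a) (ha : 0 < a) {G : Finset (Fin (r + a))} :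
    ∀ (m : ℕ) (H : Finset (Fin (r + a))), IsFacet Δ H → G ⊆ H →
      (r + a) * (r + a) ≤ (∑ x ∈ H, (x : ℕ)) + m →
      ∃ F, IsFacet Δ F ∧ F \ sigmaSeg F ⊆ G ∧ G ⊆ F := by
  intro m
  induction m with
  | zero =>
    intro H hH _ hle
    exfalso
    have h2 : (∑ x ∈ H, (x : ℕ)) ≤ H.card * ((r + a) - 1) := by
      apply Finset.sum_le_card_nsmul
      intro x _
      have := x.isLt
      omega
    have h3 : H.card ≤ r + a := by
      have := Finset.card_le_card (Finset.subset_univ H)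
      simpa using this
    have hn : 0 < r + a := by omega
    have h4 : H.card * ((r + a) - 1) ≤ (r + a) * ((r + a) - 1) :=
      Nat.mul_le_mul h3 (le_refl _)
    have h5 : (r + a) * ((r + a) - 1) + (r + a) * 1 = (r + a) * (r + a) := by
      rw [← Nat.mul_add]
      congr 1
      omega
    linarith
  | succ m ih =>
    intro H hH hGH hle
    by_cases hres : H \ sigmaSeg H ⊆ G
    · exact ⟨H, hH, hres, hGH⟩
    · obtain ⟨h, hhmem, hhG⟩ := Finset.not_subset.mp hres
      rw [Finset.mem_sdiff] at hhmem
      obtain ⟨hhH, hhσ⟩ := hhmem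
      rw [mem_sigmaSeg] at hhσ
      push_neg at hhσ
      obtain ⟨l, hhl, hlH⟩ := hhσ
      have hlt : h < l := lt_of_le_of_ne hhl (by rintro rfl; exact hlH hhH)
      have hH' : insert l (H.erase h) ∈ Δ := hS H hH.1 h l hlt hhH hlH
      have hlne : l ∉ H.erase h := fun hc => hlH (Finset.mem_of_mem_erase hc)
      have hcard : (insert l (H.erase h)).card = a := by
        rw [Finset.card_insert_of_notMem hlne, Finset.card_erase_of_mem hhH, hpure H hH]
        omega
      have hfacet : IsFacet Δ (insert l (H.erase h)) := facet_of_card hC hpure hH' hcard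
      have hGsub : G ⊆ insert l (H.erase h) := by
        intro x hx
        exact Finset.mem_insert_of_mem
          (Finset.mem_erase.mpr ⟨fun hc => hhG (hc ▸ hx), hGH hx⟩)
      apply ih _ hfacet hGsub
      have hsum : ∑ x ∈ insert l (H.erase h), (x : ℕ)
          = (l : ℕ) + ∑ x ∈ H.erase h, (x : ℕ) := Finset.sum_insert hlne
      have hsum2 : (h : ℕ) + ∑ x ∈ H.erase h, (x : ℕ) = ∑ x ∈ H, (x : ℕ) :=
        Finset.add_sum_erase H _ hhH
      have hltn : (h : ℕ) < (l : ℕ) := hlt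
      omega

lemma facet_unique (hpure : ∀ F, IsFacet Δ F → F.card = a)
    {G F₁ F₂ : Finset (Fin (r + a))} (h1 : IsFacet Δ F₁) (h2 : IsFacet Δ F₂)
    (hR1 : F₁ \ sigmaSeg F₁ ⊆ G) (hG1 : G ⊆ F₁)
    (hR2 : F₂ \ sigmaSeg F₂ ⊆ G) (hG2 : G ⊆ F₂) : F₁ = F₂ := by
  by_contra hne
  have hc1 := hpure F₁ h1
  have hc2 := hpure F₂ h2
  have hns1 : ¬ F₁ ⊆ F₂ := fun hsub => hne (Finset.eq_of_subset_of_card_le hsub (by omega))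
  have hns2 : ¬ F₂ ⊆ F₁ := fun hsub => hne (Finset.eq_of_subset_of_card_le hsub (by omega)).symm
  obtain ⟨x, hx1, hx2⟩ := Finset.not_subset.mp hns1
  obtain ⟨y, hy2, hy1⟩ := Finset.not_subset.mp hns2
  have hxσ : x ∈ sigmaSeg F₁ := by
    by_contra hxs
    exact hx2 (hG2 (hR1 (Finset.mem_sdiff.mpr ⟨hx1, hxs⟩)))
  have hyσ : y ∈ sigmaSeg F₂ := by
    by_contra hys
    exact hy1 (hG1 (hR2 (Finset.mem_sdiff.mpr ⟨hy2, hys⟩)))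
  rcases le_total x y with hle | hle
  · exact hy1 (mem_sigmaSeg.mp hxσ y hle)
  · exact hx2 (mem_sigmaSeg.mp hyσ x hle)

end Complex

lemma count_interval {r a : ℕ} (F : Finset (Fin (r + a))) (j : ℕ)
    (hd : (F \ sigmaSeg F).card ≤ j) :
    ((Finset.univ : Finset (Finset (Fin (r + a)))).filter
        (fun G => F \ sigmaSeg F ⊆ G ∧ G ⊆ F ∧ G.card = j)).card
      = Nat.choose (sigmaSeg F).card (j - (F \ sigmaSeg F).card) := by
  have hSF : sigmaSeg F ⊆ F := sigmaSeg_subset F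
  have hdisj : Disjoint (F \ sigmaSeg F) (sigmaSeg F) := Finset.sdiff_disjoint
  rw [← Finset.card_powersetCard]
  refine Finset.card_bij' (fun G _ => G \ (F \ sigmaSeg F))
    (fun T _ => (F \ sigmaSeg F) ∪ T) ?_ ?_ ?_ ?_
  · intro G hG
    simp only [Finset.mem_filter, Finset.mem_univ, true_and] at hG
    obtain ⟨hRG, hGF, hcard⟩ := hG
    rw [Finset.mem_powersetCard]
    constructor
    · intro x hx
      rw [Finset.mem_sdiff] at hx
      have hxF := hGF hx.1
      by_contra hxS
      exact hx.2 (Finset.mem_sdiff.mpr ⟨hxF, hxS⟩)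
    · rw [Finset.card_sdiff_of_subset hRG, hcard]
  · intro T hT
    rw [Finset.mem_powersetCard] at hT
    simp only [Finset.mem_filter, Finset.mem_univ, true_and]
    refine ⟨Finset.subset_union_left, Finset.union_subset Finset.sdiff_subset
      (hT.1.trans hSF), ?_⟩
    rw [Finset.card_union_of_disjoint (hdisj.mono_right hT.1), hT.2]
    omega
  · intro G hG
    simp only [Finset.mem_filter, Finset.mem_univ, true_and] at hG
    exact Finset.union_sdiff_of_subset hG.1
  · intro T hT
    rw [Finset.mem_powersetCard] at hT
    exact Finset.union_sdiff_cancel_left (hdisj.mono_right hT.1)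

lemma fvec_eq {r a : ℕ} (Δ : Set (Finset (Fin (r + a)))) (ha : 0 < a)
    (hC : IsCplx Δ) (hS : ShiftedCplx Δ) (hpure : ∀ F, IsFacet Δ F → F.card = a) (j : ℕ) :
    fvec Δ j = ∑ F ∈ (Finset.univ.filter (fun F => IsFacet Δ F)),
      (if (F \ sigmaSeg F).card ≤ j then
        Nat.choose (sigmaSeg F).card (j - (F \ sigmaSeg F).card) else 0) := by
  have hex : ∀ G ∈ Δ, ∃ F, IsFacet Δ F ∧ F \ sigmaSeg F ⊆ G ∧ G ⊆ F := by
    intro G hG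
    obtain ⟨H, hH, hGH⟩ := exists_facet_sup hC hG
    exact exists_res hC hS hpure ha ((r + a) * (r + a)) H hH hGH (by omega)
  classical
  set ϕ : Finset (Fin (r + a)) → Finset (Fin (r + a)) :=
    fun G => if hG : G ∈ Δ then (hex G hG).choose else ∅ with hϕ
  have hϕspec : ∀ G (hG : G ∈ Δ),
      IsFacet Δ (ϕ G) ∧ (ϕ G) \ sigmaSeg (ϕ G) ⊆ G ∧ G ⊆ ϕ G := by
    intro G hG
    rw [hϕ]
    simp only [dif_pos hG]
    exact (hex G hG).choose_spec
  have h0 : fvec Δ j = (Finset.univ.filter (fun G => G ∈ Δ ∧ G.card = j)).card := by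
    rw [fvec, ← Set.ncard_coe_finset]
    congr 1
    ext G
    simp [Set.mem_setOf_eq]
  rw [h0]
  rw [Finset.card_eq_sum_card_fiberwise (f := ϕ)
    (t := Finset.univ.filter (fun F => IsFacet Δ F))
    (fun G hG => by
      simp only [Finset.mem_coe, Finset.mem_filter, Finset.mem_univ, true_and] at hG ⊢
      exact (hϕspec G hG.1).1)]
  apply Finset.sum_congr rfl
  intro F hF
  rw [Finset.mem_filter] at hF
  replace hF := hF.2
  have hfib : (Finset.univ.filter (fun G => G ∈ Δ ∧ G.card = j)).filter (fun G => ϕ G = F)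
      = Finset.univ.filter (fun G => F \ sigmaSeg F ⊆ G ∧ G ⊆ F ∧ G.card = j) := by
    ext G
    simp only [Finset.mem_filter, Finset.mem_univ, true_and]
    constructor
    · rintro ⟨⟨hGΔ, hcard⟩, hϕG⟩
      obtain ⟨_, hR, hsub⟩ := hϕspec G hGΔ
      rw [hϕG] at hR hsub
      exact ⟨hR, hsub, hcard⟩
    · rintro ⟨hR, hsub, hcard⟩
      have hGΔ : G ∈ Δ := hC F hF.1 G hsub
      obtain ⟨hfac', hR', hsub'⟩ := hϕspec G hGΔ
      exact ⟨⟨hGΔ, hcard⟩, facet_unique hpure hfac' hF hR' hsub' hR hsub⟩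
  rw [hfib]
  by_cases hd : (F \ sigmaSeg F).card ≤ j
  · rw [if_pos hd, count_interval F j hd]
  · rw [if_neg hd, Finset.card_eq_zero, Finset.filter_eq_empty_iff]
    rintro G _ ⟨hRG, _, hcard⟩
    exact hd (hcard ▸ Finset.card_le_card hRG)

lemma inner_id (a i d : ℕ) (hd : d ≤ a) (hi : i ≤ a) :
    (∑ i' ∈ Finset.range (i + 1), (-1 : ℤ) ^ (i - i') * ((a - i').choose (i - i') : ℤ) *
      (if d ≤ i' then (((a - d).choose (i' - d) : ℕ) : ℤ) else 0))
    = if d = i then 1 else 0 := by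
  by_cases hdi : d ≤ i
  · have hsub : Finset.Ico d (i + 1) ⊆ Finset.range (i + 1) := by
      intro x hx; simp only [Finset.mem_Ico, Finset.mem_range] at *; omega
    rw [← Finset.sum_subset hsub (fun x hx hx' => by
      simp only [Finset.mem_Ico, Finset.mem_range] at hx hx'
      rw [if_neg (by omega), mul_zero])]
    rw [Finset.sum_Ico_eq_sum_range]
    have hs : i + 1 - d = (i - d) + 1 := by omega
    rw [hs]
    have hstep : ∀ k ∈ Finset.range ((i - d) + 1),
        (-1 : ℤ) ^ (i - (d + k)) * ((a - (d + k)).choose (i - (d + k)) : ℤ) *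
          (if d ≤ d + k then (((a - d).choose (d + k - d) : ℕ) : ℤ) else 0)
        = ((a - d).choose (i - d) : ℤ) * ((-1 : ℤ) ^ ((i - d) - k) * ((i - d).choose k : ℤ)) := by
      intro k hk
      rw [Finset.mem_range] at hk
      rw [if_pos (by omega)]
      have e1 : i - (d + k) = (i - d) - k := by omega
      have e2 : a - (d + k) = (a - d) - k := by omega
      have e3 : d + k - d = k := by omega
      rw [e1, e2, e3]
      have hnat : (a - d).choose (i - d) * (i - d).choose k
          = (a - d).choose k * ((a - d) - k).choose ((i - d) - k) :=
        Nat.choose_mul (by omega)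
      have hcast : ((a - d).choose (i - d) : ℤ) * ((i - d).choose k : ℤ)
          = ((a - d).choose k : ℤ) * (((a - d) - k).choose ((i - d) - k) : ℤ) := by
        exact_mod_cast hnat
      linear_combination (-(-1 : ℤ) ^ ((i - d) - k)) * hcast
    rw [Finset.sum_congr rfl hstep, ← Finset.mul_sum]
    have halt : (∑ k ∈ Finset.range ((i - d) + 1),
        (-1 : ℤ) ^ ((i - d) - k) * ((i - d).choose k : ℤ)) = if (i - d) = 0 then 1 else 0 := by
      rw [← Finset.sum_range_reflect, ← Int.alternating_sum_range_choose (n := i - d)]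
      apply Finset.sum_congr rfl
      intro k hk
      rw [Finset.mem_range] at hk
      have e1 : (i - d) + 1 - 1 - k = (i - d) - k := by omega
      have e2 : (i - d) - ((i - d) - k) = k := by omega
      rw [e1, e2, Nat.choose_symm (by omega)]
    rw [halt]
    by_cases hs0 : i - d = 0
    · rw [if_pos hs0, if_pos (by omega : d = i)]
      rw [hs0]
      simp
    · rw [if_neg hs0, if_neg (by omega : ¬ d = i), mul_zero]
  · rw [if_neg (by omega : ¬ d = i)]
    apply Finset.sum_eq_zero
    intro i' hi'
    rw [Finset.mem_range] at hi'
    rw [if_neg (by omega), mul_zero]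

end Aux
/-- (Proposition 3.3(b)) For a pure shifted `(a-1)`-complex `Δ` on `[n]`
(`n = r + a`), the `h`-vector of `Δ` is the `f`-vector of `Ψ(Δ) = {ψ(F) : F facet of Δ}`:
`h_i(Δ)` equals the number of facets `F` with `deg ψ(F) = i`. -/
theorem hvec_eq_fvec_psi (r a : ℕ) (ha : 0 < a) (Δ : Set (Finset (Fin (r + a))))
    (hC : IsCplx Δ) (hS : ShiftedCplx Δ)
    (hpure : ∀ F, IsFacet Δ F → F.card = a) (hne : ∃ F ∈ Δ, F.card = a) :
    ∀ i ≤ a, hvec a Δ i =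
      ({F : Finset (Fin (r + a)) | IsFacet Δ F ∧ degM (psiM r F) = i}.ncard : ℤ) := by
  classical
  intro i hi
  have hRHS : ({F : Finset (Fin (r + a)) | IsFacet Δ F ∧ degM (psiM r F) = i}.ncard : ℤ)
      = ((((Finset.univ : Finset (Finset (Fin (r + a)))).filter (fun F => IsFacet Δ F)).filter
          (fun F => (F \ sigmaSeg F).card = i)).card : ℤ) := by
    congr 1
    rw [← Set.ncard_coe_finset]
    congr 1
    ext F
    simp only [Set.mem_setOf_eq, Finset.coe_filter, Finset.mem_univ, true_and,
      Finset.mem_filter]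
    constructor
    · rintro ⟨hF, hdeg⟩
      exact ⟨hF, by rw [← degM_psiM F (hpure F hF)]; exact hdeg⟩
    · rintro ⟨hF, hdeg⟩
      exact ⟨hF, by rw [degM_psiM F (hpure F hF)]; exact hdeg⟩
  rw [hRHS, hvec]
  have hσcard : ∀ F, IsFacet Δ F → (sigmaSeg F).card = a - (F \ sigmaSeg F).card := by
    intro F hF
    have h1 : (F \ sigmaSeg F).card = F.card - (sigmaSeg F).card :=
      Finset.card_sdiff_of_subset (sigmaSeg_subset F)
    have h2 := Finset.card_le_card (sigmaSeg_subset F)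
    have h3 := hpure F hF
    omega
  have hstep : ∀ i' ∈ Finset.range (i + 1),
      (-1 : ℤ) ^ (i - i') * ((a - i').choose (i - i') : ℤ) * (fvec Δ i' : ℤ)
      = ∑ F ∈ (Finset.univ : Finset (Finset (Fin (r + a)))).filter (fun F => IsFacet Δ F),
          (-1 : ℤ) ^ (i - i') * ((a - i').choose (i - i') : ℤ) *
            (if (F \ sigmaSeg F).card ≤ i' then
              (((a - (F \ sigmaSeg F).card).choose (i' - (F \ sigmaSeg F).card) : ℕ) : ℤ)
            else 0) := by
    intro i' _
    rw [fvec_eq Δ ha hC hS hpure i']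
    rw [Nat.cast_sum, Finset.mul_sum]
    apply Finset.sum_congr rfl
    intro F hF
    rw [Finset.mem_filter] at hF
    rw [hσcard F hF.2]
    rw [apply_ite (fun x : ℕ => (x : ℤ))]
    norm_num
  rw [Finset.sum_congr rfl hstep, Finset.sum_comm]
  have h2 : (∑ F ∈ (Finset.univ : Finset (Finset (Fin (r + a)))).filter
        (fun F => IsFacet Δ F),
      ∑ i' ∈ Finset.range (i + 1),
        (-1 : ℤ) ^ (i - i') * ((a - i').choose (i - i') : ℤ) *
          (if (F \ sigmaSeg F).card ≤ i' then
            (((a - (F \ sigmaSeg F).card).choose (i' - (F \ sigmaSeg F).card) : ℕ) : ℤ)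
          else 0))
      = ∑ F ∈ (Finset.univ : Finset (Finset (Fin (r + a)))).filter (fun F => IsFacet Δ F),
          (if (F \ sigmaSeg F).card = i then (1 : ℤ) else 0) := by
    apply Finset.sum_congr rfl
    intro F hF
    rw [Finset.mem_filter] at hF
    exact inner_id a i ((F \ sigmaSeg F).card)
      (le_trans (Finset.card_le_card Finset.sdiff_subset) (le_of_eq (hpure F hF.2))) hi
  rw [h2, Finset.sum_boole]
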